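/- For a > 0 and ε > 0 define a_ε := log(1 + a/ε) / log(1 + 1/ε). Then: (i) if a > 1, the map ε ↦ a_ε is strictly increasing on (0, ∞), i.e., for 0 < ε₂ < ε₁ one has a_{ε₂} < a_{ε₁}; (ii) if 0 < a < 1, the map ε ↦ a_ε is strictly decreasing on (0, ∞), i.e., for 0 < ε₂ < ε₁ one has a_{ε₂} > a_{ε₁}. -/

import Mathlib

open Real Set Filter

private lemma key (a : ℝ) (ha : 1 < a) {t₁ t₂ : ℝ} (h1 : 0 < t₁) (h12 : t₁ < t₂) :
    Real.log (1 + a * t₂) / Real.log (1 + t₂) < Real.log (1 + a * t₁) / Real.log (1 + t₁) := by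
  have ha0 : 0 < a := by linarith
  set φ : ℝ → ℝ := fun u => Real.log (1 - a + a * Real.exp u) with hφ
  have den_pos : ∀ u : ℝ, 0 ≤ u → 0 < 1 - a + a * Real.exp u := by
    intro u hu
    nlinarith [Real.one_le_exp hu]
  have hder : ∀ u : ℝ, 0 ≤ u →
      HasDerivAt φ (a * Real.exp u / (1 - a + a * Real.exp u)) u := by
    intro u hu
    have h1 : HasDerivAt (fun u : ℝ => 1 - a + a * Real.exp u) (a * Real.exp u) u := by
      simpa using ((Real.hasDerivAt_exp u).const_mul a).const_add (1 - a)
    exact h1.log (ne_of_gt (den_pos u hu))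
  have hcont : ContinuousOn φ (Ici 0) := fun x hx =>
    (hder x hx).continuousAt.continuousWithinAt
  have hsc : StrictConcaveOn ℝ (Ici (0:ℝ)) φ := by
    apply strictConcaveOn_of_deriv2_neg (convex_Ici 0) hcont
    intro x hx
    rw [interior_Ici] at hx
    have hx0 : (0:ℝ) < x := hx
    have hev : deriv φ =ᶠ[nhds x]
        (fun u => a * Real.exp u / (1 - a + a * Real.exp u)) := by
      filter_upwards [Ioi_mem_nhds hx0] with u hu
      exact (hder u (le_of_lt (mem_Ioi.mp hu))).deriv
    have hdx : 0 < 1 - a + a * Real.exp x := den_pos x hx0.le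
    have hnum : HasDerivAt (fun u : ℝ => a * Real.exp u) (a * Real.exp x) x :=
      (Real.hasDerivAt_exp x).const_mul a
    have hden : HasDerivAt (fun u : ℝ => 1 - a + a * Real.exp u) (a * Real.exp x) x := by
      simpa using ((Real.hasDerivAt_exp x).const_mul a).const_add (1 - a)
    have hψ : HasDerivAt (fun u => a * Real.exp u / (1 - a + a * Real.exp u))
        ((a * Real.exp x * (1 - a + a * Real.exp x) - a * Real.exp x * (a * Real.exp x)) /
          (1 - a + a * Real.exp x) ^ 2) x := hnum.div hden (ne_of_gt hdx)
    have : deriv^[2] φ x =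
        (a * Real.exp x * (1 - a + a * Real.exp x) - a * Real.exp x * (a * Real.exp x)) /
          (1 - a + a * Real.exp x) ^ 2 := by
      simp only [Function.iterate_succ, Function.iterate_zero, Function.comp_apply, id]
      rw [hev.deriv_eq, hψ.deriv]
    rw [this]
    apply div_neg_of_neg_of_pos
    · nlinarith [Real.exp_pos x]
    · positivity
  -- apply concavity to u₁ = log(1+t₁) < u₂ = log(1+t₂)
  set u₁ := Real.log (1 + t₁) with hu₁
  set u₂ := Real.log (1 + t₂) with hu₂
  have hu1pos : 0 < u₁ := Real.log_pos (by linarith)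
  have hu2pos : 0 < u₂ := Real.log_pos (by linarith)
  have hu12 : u₁ < u₂ := Real.log_lt_log (by linarith) (by linarith)
  have hφu : ∀ t : ℝ, 0 < t → φ (Real.log (1 + t)) = Real.log (1 + a * t) := by
    intro t ht
    simp only [hφ]
    rw [Real.exp_log (by linarith)]
    ring_nf
  have hφ0 : φ 0 = 0 := by simp [hφ]
  have hslope : u₁ / u₂ * φ u₂ < φ u₁ := by
    have hsum : (1 - u₁ / u₂) + u₁ / u₂ = 1 := by ring
    have hwa : 0 < 1 - u₁ / u₂ := by
      have : u₁ / u₂ < 1 := (div_lt_one hu2pos).mpr hu12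
      linarith
    have hwb : 0 < u₁ / u₂ := by positivity
    have hpt : (1 - u₁ / u₂) • (0:ℝ) + (u₁ / u₂) • u₂ = u₁ := by
      field_simp
      rw [smul_eq_mul, smul_eq_mul, mul_zero, zero_add]
      exact div_mul_cancel₀ u₁ hu2pos.ne'
    have := hsc.2 (self_mem_Ici) (mem_Ici.mpr hu2pos.le) (ne_of_lt hu2pos) hwa hwb hsum
    rw [hpt, hφ0] at this
    simpa using this
  rw [hφu t₁ h1, hφu t₂ (lt_trans h1 h12)] at hslope
  rw [div_lt_div_iff₀ hu2pos hu1pos]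
  have : u₁ / u₂ * Real.log (1 + a * t₂) * u₂ = Real.log (1 + a * t₂) * u₁ := by
    field_simp
  nlinarith [hslope, hu2pos]

theorem stmt_7 (a : ℝ) (ha : 0 < a) :
    (1 < a → ∀ ε₁ ε₂ : ℝ, 0 < ε₂ → ε₂ < ε₁ →
      Real.log (1 + a / ε₂) / Real.log (1 + 1 / ε₂)
        < Real.log (1 + a / ε₁) / Real.log (1 + 1 / ε₁)) ∧
    (a < 1 → ∀ ε₁ ε₂ : ℝ, 0 < ε₂ → ε₂ < ε₁ →
      Real.log (1 + a / ε₁) / Real.log (1 + 1 / ε₁)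
        < Real.log (1 + a / ε₂) / Real.log (1 + 1 / ε₂)) := by
  constructor
  · intro ha1 ε₁ ε₂ hε₂ hlt
    have hε₁ : 0 < ε₁ := lt_trans hε₂ hlt
    have ht1 : (0:ℝ) < 1 / ε₁ := by positivity
    have ht12 : 1 / ε₁ < 1 / ε₂ := by
      exact one_div_lt_one_div_of_lt hε₂ hlt
    have := key a ha1 ht1 ht12
    simpa [div_eq_mul_one_div a ε₁, div_eq_mul_one_div a ε₂] using this
  · intro ha1 ε₁ ε₂ hε₂ hlt
    have hε₁ : 0 < ε₁ := lt_trans hε₂ hlt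
    have hb : 1 < 1 / a := by rw [lt_div_iff₀ ha]; linarith
    have hs1 : (0:ℝ) < a / ε₁ := by positivity
    have hs12 : a / ε₁ < a / ε₂ := div_lt_div_of_pos_left ha hε₂ hlt
    have hkey := key (1/a) hb hs1 hs12
    have hb2 : (1/a) * (a / ε₂) = 1 / ε₂ := by field_simp
    have hb1 : (1/a) * (a / ε₁) = 1 / ε₁ := by field_simp
    rw [hb1, hb2] at hkey
    -- hkey : log(1+1/ε₂)/log(1+a/ε₂) < log(1+1/ε₁)/log(1+a/ε₁)
    have l1 : 0 < Real.log (1 + a / ε₁) := Real.log_pos (by linarith)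
    have l2 : 0 < Real.log (1 + a / ε₂) := Real.log_pos (by nlinarith)
    have l3 : 0 < Real.log (1 + 1 / ε₁) := Real.log_pos (by nlinarith)
    have l4 : 0 < Real.log (1 + 1 / ε₂) := Real.log_pos (by nlinarith)
    rw [div_lt_div_iff₀ l2 l1] at hkey
    rw [div_lt_div_iff₀ l3 l4]
    nlinarith [hkey]
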